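/- Let e ≥ 3 be odd and let m be a positive multiple of e. For every integer 0 ≤ j ≤ m, the e-core of the partition 2^j ⊔ 1^{2m−2j} (the partition with j parts equal to 2 and 2m−2j parts equal to 1) is the empty partition if and only if j ≡ 0 or 1 (mod e). -/

import Mathlib

namespace GUnBranching

/-- A partition, given by its (0-indexed) weakly decreasing, eventually zero
sequence of parts: `part k` is the (k+1)-st part `λ_{k+1}`. -/
structure Partition where
  part : ℕ → ℕ
  antitone : ∀ i j : ℕ, i ≤ j → part j ≤ part i
  eventually_zero : ∃ N : ℕ, ∀ n : ℕ, N ≤ n → part n = 0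

namespace Partition

/-- The set of boxes (row, column) (0-indexed) of the Young diagram of a partition. -/
def boxSet (p : Partition) : Set (ℕ × ℕ) := {b | b.2 < p.part b.1}

/-- The size `|λ|` of a partition: the number of boxes of its Young diagram. -/
noncomputable def size (p : Partition) : ℕ := p.boxSet.ncard

/-- The β-set `β(λ) = {λ_k - k + 1 : k ≥ 1}` (0-indexed: `{part k - k : k ∈ ℕ}`). -/
def betaSet (p : Partition) : Set ℤ := {z | ∃ k : ℕ, z = (p.part k : ℤ) - k}

/-- The charged β-set `{λ_k + s - k + 1 : k ≥ 1}` of `(λ, s)`. -/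
def chargedBetaSet (p : Partition) (s : ℤ) : Set ℤ :=
  {z | ∃ k : ℕ, z = (p.part k : ℤ) + s - k}

/-- The number of (nonzero) parts of a partition. -/
noncomputable def length (p : Partition) : ℕ := {k : ℕ | p.part k ≠ 0}.ncard

end Partition

/-- The empty partition `∅`. -/
def emptyPartition : Partition :=
  ⟨fun _ => 0, fun _ _ _ => le_rfl, ⟨0, fun _ _ => rfl⟩⟩

/-- The partition `3^a 2^b 1^c` (a parts equal to 3, b parts equal to 2, c parts equal to 1). -/
def threeTwoOne (a b c : ℕ) : Partition where
  part k := if k < a then 3 else if k < a + b then 2 else if k < a + b + c then 1 else 0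
  antitone i j h := by (try dsimp only); split_ifs <;> omega
  eventually_zero := ⟨a + b + c, fun n hn => by (try dsimp only); split_ifs <;> omega⟩

/-- The column partition `1^m`. -/
def column (m : ℕ) : Partition := threeTwoOne 0 0 m

/-- The staircase partition `Δ_t = (t, t-1, …, 2, 1)`. -/
def staircase (t : ℕ) : Partition where
  part k := t - k
  antitone i j h := Nat.sub_le_sub_left h t
  eventually_zero := ⟨t, fun n hn => Nat.sub_eq_zero_of_le hn⟩

/-- The partition `Δ_t ⊔ 1^r` (staircase with a column of `r` extra parts equal to 1). -/
def staircaseColumn (t r : ℕ) : Partition where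
  part k := if k < t then t - k else if k < t + r then 1 else 0
  antitone i j h := by (try dsimp only); split_ifs <;> omega
  eventually_zero := ⟨t + r, fun n hn => by (try dsimp only); split_ifs <;> omega⟩

/-- `p ⊔ 1^r` : append `r` extra parts equal to 1 to the partition `p`. -/
noncomputable def appendOnes (p : Partition) (r : ℕ) : Partition where
  part k := max (p.part k) (if k < p.length + r then 1 else 0)
  antitone i j h := max_le_max (p.antitone i j h) (by split_ifs <;> omega)
  eventually_zero := by
    obtain ⟨N, hN⟩ := p.eventually_zero
    refine ⟨max N (p.length + r), fun n hn => ?_⟩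
    have h1 : p.part n = 0 := hN n (le_trans (le_max_left _ _) hn)
    have h2 : ¬ n < p.length + r := by
      have := le_trans (le_max_right N (p.length + r)) hn
      omega
    simp [h1, h2]

/-- `mu` is obtained from `lam` by removing one rim `e`-hook: on β-sets, a bead `x`
with an empty spot at `x - e` is moved to `x - e`. -/
def RemoveHook (e : ℕ) (lam mu : Partition) : Prop :=
  ∃ x : ℤ, x ∈ lam.betaSet ∧ (x - e) ∉ lam.betaSet ∧
    mu.betaSet = insert (x - e) (lam.betaSet \ {x})

/-- A partition is an `e`-core if no rim `e`-hook can be removed from it. -/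
def IsECore (e : ℕ) (p : Partition) : Prop := ∀ mu : Partition, ¬ RemoveHook e p mu

/-- `core` is the `e`-core of `lam`: it is obtained from `lam` by repeatedly removing
rim `e`-hooks, and no further rim `e`-hook can be removed. -/
def HasECore (e : ℕ) (lam core : Partition) : Prop :=
  Relation.ReflTransGen (RemoveHook e) lam core ∧ IsECore e core

/-- `lam` and `mu` have the same `e`-core. -/
def SameECore (e : ℕ) (lam mu : Partition) : Prop :=
  ∃ core : Partition, HasECore e lam core ∧ HasECore e mu core

/-- `(q1, q2)` is the 2-quotient of `lam`: the odd (resp. even) β-numbers of `lam`,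
transformed by `v ↦ (v+1)/2` (resp. `v ↦ v/2`), form the β-set of `q1` (resp. `q2`)
for a suitable charge. -/
def IsTwoQuotient (lam q1 q2 : Partition) : Prop :=
  (∃ c : ℤ, q1.chargedBetaSet c = {z : ℤ | 2 * z - 1 ∈ lam.betaSet}) ∧
  (∃ c : ℤ, q2.chargedBetaSet c = {z : ℤ | 2 * z ∈ lam.betaSet})

/-- The charge `s_t`: `(-(t+1+e)/2, t/2)` for even `t`, `(-(t+1)/2, (t+e)/2)` for odd `t`. -/
def tauCharge (e t : ℕ) : ℤ × ℤ :=
  if t % 2 = 0 then (-(((t : ℤ) + 1 + e) / 2), (t : ℤ) / 2)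
  else (-(((t : ℤ) + 1) / 2), ((t : ℤ) + e) / 2)

/-- `bp` is the twisted 2-quotient `τ(lam)` of `lam`, a partition with 2-core `Δ_t`:
it is the 2-quotient for even `t` and the swapped 2-quotient for odd `t`; the
corresponding charge is `tauCharge e t`. -/
def IsTwistedQuotient (t : ℕ) (lam : Partition) (bp : Partition × Partition) : Prop :=
  HasECore 2 lam (staircase t) ∧
  (if t % 2 = 0 then IsTwoQuotient lam bp.1 bp.2 else IsTwoQuotient lam bp.2 bp.1)

/-- The abacus of a charged bipartition: positions are (column, row) where row
`0 : Fin 2` is the bottom row (first component, charge `s.1`) and row `1 : Fin 2`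
the top row (second component, charge `s.2`). -/
def abacus (bp : Partition × Partition) (s : ℤ × ℤ) : Set (ℤ × Fin 2) :=
  {b | b.1 ∈ (if b.2 = (0 : Fin 2) then bp.1.chargedBetaSet s.1 else bp.2.chargedBetaSet s.2)}

/-- `P` is an `e`-period of the abacus `A`: beads `(x, r 0), (x-1, r 1), …, (x-e+1, r (e-1))`
of `A` where `x` is the largest column containing a bead of `A`, `r i = 0` (bottom row)
whenever `(x - i, bottom)` is a bead of `A` (for `i < e-1`), and once in the bottom row the
period stays in the bottom row. -/
def IsEPeriodOf (e : ℕ) (A P : Set (ℤ × Fin 2)) : Prop :=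
  ∃ (x : ℤ) (r : ℕ → Fin 2),
    P = {b | ∃ i : ℕ, i < e ∧ b = ((x - i : ℤ), r i)} ∧
    (∀ i : ℕ, i < e → ((x - i : ℤ), r i) ∈ A) ∧
    (∀ b ∈ A, b.1 ≤ x) ∧
    (∀ i : ℕ, i + 1 < e → ((x - i : ℤ), (0 : Fin 2)) ∈ A → r i = 0) ∧
    (∀ i : ℕ, i + 1 < e → r i = 0 → r (i + 1) = 0)

/-- `P 0, P 1, P 2, …` is the sequence of `e`-periods of `A`:
each `P k` is the `e`-period of `A` minus the previous periods. -/
def IsPeriodSeq (e : ℕ) (A : Set (ℤ × Fin 2)) (P : ℕ → Set (ℤ × Fin 2)) : Prop :=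
  ∀ k : ℕ, IsEPeriodOf e (A \ ⋃ i ∈ Finset.range k, P i) (P k)

/-- The abacus `A` is totally `e`-periodic: the `k`-th `e`-period exists for every `k`. -/
def TotallyPeriodic (e : ℕ) (A : Set (ℤ × Fin 2)) : Prop :=
  ∃ P : ℕ → Set (ℤ × Fin 2), IsPeriodSeq e A P

/-- `P` is the `(k+1)`-st `e`-period of `A` (so `k = 0` gives the first `e`-period). -/
def IsKthPeriod (e : ℕ) (A : Set (ℤ × Fin 2)) (k : ℕ) (P : Set (ℤ × Fin 2)) : Prop :=
  ∃ Q : ℕ → Set (ℤ × Fin 2),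
    (∀ i : ℕ, i ≤ k → IsEPeriodOf e (A \ ⋃ j ∈ Finset.range i, Q j) (Q i)) ∧ Q k = P

/-- Shift a set of abacus positions one step to the right. -/
def shiftRight (P : Set (ℤ × Fin 2)) : Set (ℤ × Fin 2) := {b | (b.1 - 1, b.2) ∈ P}

/-- Edge of the `sl_∞`-crystal moving the `(k+1)`-st `e`-period one step to the right:
the shifted period must again be the `(k+1)`-st `e`-period of the resulting abacus. -/
def SlInfEdgeAt (e : ℕ) (s : ℤ × ℤ) (k : ℕ) (lam mu : Partition × Partition) : Prop :=
  TotallyPeriodic e (abacus lam s) ∧ TotallyPeriodic e (abacus mu s) ∧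
  ∃ P : Set (ℤ × Fin 2),
    IsKthPeriod e (abacus lam s) k P ∧
    abacus mu s = (abacus lam s \ P) ∪ shiftRight P ∧
    IsKthPeriod e (abacus mu s) k (shiftRight P)

/-- Edge of the `sl_∞`-crystal. -/
def SlInfEdge (e : ℕ) (s : ℤ × ℤ) (lam mu : Partition × Partition) : Prop :=
  ∃ k : ℕ, SlInfEdgeAt e s k lam mu

/-- A source vertex of the `sl_∞`-crystal: a vertex (totally `e`-periodic abacus)
with no incoming edge. -/
def IsSlInfSource (e : ℕ) (s : ℤ × ℤ) (bp : Partition × Partition) : Prop :=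
  TotallyPeriodic e (abacus bp s) ∧ ∀ lam : Partition × Partition, ¬ SlInfEdge e s lam bp

/-- A box of a bipartition: (component, row, column), all 0-indexed
(component `0 : Fin 2` is the first component `λ¹`). -/
abbrev Box := Fin 2 × ℕ × ℕ

/-- The component of a bipartition indexed by `j : Fin 2`. -/
def comp (bp : Partition × Partition) (j : Fin 2) : Partition :=
  if j = 0 then bp.1 else bp.2

/-- `b` is a box of the bipartition `bp`. -/
def IsBoxOf (bp : Partition × Partition) (b : Box) : Prop :=
  b.2.2 < (comp bp b.1).part b.2.1

/-- The (charged) content `ct(b) = y - x + s_j` of a box `b = (j, x, y)`. -/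
def content (s : ℤ × ℤ) (b : Box) : ℤ :=
  (b.2.2 : ℤ) - (b.2.1 : ℤ) + (if b.1 = 0 then s.1 else s.2)

/-- `b` is an addable box of the bipartition `bp`. -/
def IsAddable (bp : Partition × Partition) (b : Box) : Prop :=
  b.2.2 = (comp bp b.1).part b.2.1 ∧
  (b.2.1 = 0 ∨ (comp bp b.1).part b.2.1 < (comp bp b.1).part (b.2.1 - 1))

/-- `b` is a removable box of the bipartition `bp`. -/
def IsRemovable (bp : Partition × Partition) (b : Box) : Prop :=
  b.2.2 + 1 = (comp bp b.1).part b.2.1 ∧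
  (comp bp b.1).part (b.2.1 + 1) < (comp bp b.1).part b.2.1

/-- The total order on addable/removable boxes: `b ≤ b'` iff `b = b'`, or
`ct(b) < ct(b')`, or the contents are equal, `b` lies in the second component and
`b'` in the first. -/
def boxLE (s : ℤ × ℤ) (b b' : Box) : Prop :=
  b = b' ∨ content s b < content s b' ∨
    (content s b = content s b' ∧ b.1 = 1 ∧ b'.1 = 0)

/-- The set of addable or removable boxes of residue `i` (the letters of the `i`-word). -/
def IWord (e : ℕ) (s : ℤ × ℤ) (bp : Partition × Partition) (i : ZMod e) : Set Box :=
  {b | (IsAddable bp b ∨ IsRemovable bp b) ∧ ((content s b : ZMod e) = i)}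

/-- A removable box of residue `i` surviving the Kashiwara cancellation: reading the
`i`-word in increasing order and cancelling each removable box with a following addable
box (recursively cancelling adjacent removable-addable pairs), `b` is not cancelled.
Equivalently, every final segment of the `i`-word starting at `b` contains strictly
more removable than addable boxes. -/
def SurvivingRemovable (e : ℕ) (s : ℤ × ℤ) (bp : Partition × Partition)
    (i : ZMod e) (b : Box) : Prop :=
  b ∈ IWord e s bp i ∧ IsRemovable bp b ∧
  ∀ c ∈ IWord e s bp i, boxLE s b c →
    {d : Box | d ∈ IWord e s bp i ∧ IsAddable bp d ∧ boxLE s b d ∧ boxLE s d c}.ncard <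
    {d : Box | d ∈ IWord e s bp i ∧ IsRemovable bp d ∧ boxLE s b d ∧ boxLE s d c}.ncard

/-- The good removable `i`-box: the smallest removable `i`-box surviving the
Kashiwara cancellation. -/
def IsGoodRemovable (e : ℕ) (s : ℤ × ℤ) (bp : Partition × Partition)
    (i : ZMod e) (b : Box) : Prop :=
  SurvivingRemovable e s bp i b ∧
  ∀ b' : Box, SurvivingRemovable e s bp i b' → boxLE s b b'

/-- An addable box of residue `i` surviving the Kashiwara cancellation. -/
def SurvivingAddable (e : ℕ) (s : ℤ × ℤ) (bp : Partition × Partition)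
    (i : ZMod e) (b : Box) : Prop :=
  b ∈ IWord e s bp i ∧ IsAddable bp b ∧
  ∀ c ∈ IWord e s bp i, boxLE s c b →
    {d : Box | d ∈ IWord e s bp i ∧ IsRemovable bp d ∧ boxLE s c d ∧ boxLE s d b}.ncard <
    {d : Box | d ∈ IWord e s bp i ∧ IsAddable bp d ∧ boxLE s c d ∧ boxLE s d b}.ncard

/-- The good addable `i`-box: the largest addable `i`-box surviving the
Kashiwara cancellation. -/
def IsGoodAddable (e : ℕ) (s : ℤ × ℤ) (bp : Partition × Partition)
    (i : ZMod e) (b : Box) : Prop :=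
  SurvivingAddable e s bp i b ∧
  ∀ b' : Box, SurvivingAddable e s bp i b' → boxLE s b' b

/-- A source vertex of the `ŝl_e`-crystal: no good removable `i`-box for any residue `i`. -/
def IsSlESource (e : ℕ) (s : ℤ × ℤ) (bp : Partition × Partition) : Prop :=
  ∀ (i : ZMod e) (b : Box), ¬ IsGoodRemovable e s bp i b

/-- `bp'` is obtained from `bp` by adding the box `b`. -/
def AddBox (bp : Partition × Partition) (b : Box) (bp' : Partition × Partition) : Prop :=
  if b.1 = 0 then
    bp'.2 = bp.2 ∧ bp'.1.part = Function.update bp.1.part b.2.1 (bp.1.part b.2.1 + 1)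
  else
    bp'.1 = bp.1 ∧ bp'.2.part = Function.update bp.2.part b.2.1 (bp.2.part b.2.1 + 1)

/-- Dominance order: `Dominates mu la` means `la ⊴ mu`. -/
def Dominates (mu la : Partition) : Prop :=
  ∀ k : ℕ, ∑ i ∈ Finset.range k, la.part i ≤ ∑ i ∈ Finset.range k, mu.part i

section Aux

lemma partition_eq_of_part_eq {p q : Partition} (h : p.part = q.part) : p = q := by
  cases p; cases q; simpa using h

lemma betaSet_T (b c : ℕ) :
    (threeTwoOne 0 b c).betaSet =
      {z : ℤ | z ≤ 2 ∧ z ≠ 2 - b ∧ z ≠ 1 - b - c} := by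
  ext z
  simp only [Partition.betaSet, threeTwoOne, Set.mem_setOf_eq]
  constructor
  · rintro ⟨k, rfl⟩
    split_ifs <;> refine ⟨by omega, by omega, by omega⟩
  · rintro ⟨h1, h2, h3⟩
    refine ⟨if 3 - (b:ℤ) ≤ z then (2 - z).toNat else if 2 - (b:ℤ) - c ≤ z then (1 - z).toNat
      else (-z).toNat, ?_⟩
    split_ifs <;> omega

lemma betaSet_empty : emptyPartition.betaSet = {z : ℤ | z ≤ 0} := by
  ext z
  simp only [Partition.betaSet, emptyPartition, Set.mem_setOf_eq]
  constructor
  · rintro ⟨k, rfl⟩; omega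
  · intro h; exact ⟨(-z).toNat, by omega⟩

lemma isECore_empty (e : ℕ) : IsECore e emptyPartition := by
  rintro mu ⟨x, hx, hxe, -⟩
  rw [betaSet_empty] at hx hxe
  simp only [Set.mem_setOf_eq] at hx hxe
  omega

lemma move_upper (e b c : ℕ) (he : 0 < e) (hb : e ≤ b) :
    RemoveHook e (threeTwoOne 0 b c) (threeTwoOne 0 (b - e) (c + e)) := by
  refine ⟨2 - (b:ℤ) + e, ?_, ?_, ?_⟩
  · rw [betaSet_T]; exact ⟨by omega, by omega, by omega⟩
  · rw [betaSet_T]; simp only [Set.mem_setOf_eq, not_and, ne_eq, not_not]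
    intro h1 h2; omega
  · rw [betaSet_T, betaSet_T]; ext z
    simp only [Set.mem_insert_iff, Set.mem_diff, Set.mem_singleton_iff, Set.mem_setOf_eq]
    omega

lemma move_lower (e b c : ℕ) (he : 0 < e) (hc : e ≤ c) :
    RemoveHook e (threeTwoOne 0 b c) (threeTwoOne 0 b (c - e)) := by
  refine ⟨1 - (b:ℤ) - c + e, ?_, ?_, ?_⟩
  · rw [betaSet_T]; exact ⟨by omega, by omega, by omega⟩
  · rw [betaSet_T]; simp only [Set.mem_setOf_eq, not_and, ne_eq, not_not]
    intro h1 h2; omega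
  · rw [betaSet_T, betaSet_T]; ext z
    simp only [Set.mem_insert_iff, Set.mem_diff, Set.mem_singleton_iff, Set.mem_setOf_eq]
    omega

lemma move_final (e : ℕ) (he3 : 3 ≤ e) :
    RemoveHook e (threeTwoOne 0 1 (e - 2)) (threeTwoOne 0 0 0) := by
  refine ⟨2, ?_, ?_, ?_⟩
  · rw [betaSet_T]; exact ⟨by omega, by omega, by omega⟩
  · rw [betaSet_T]; simp only [Set.mem_setOf_eq, not_and, ne_eq, not_not]
    intro h1 h2; omega
  · rw [betaSet_T, betaSet_T]; ext z
    simp only [Set.mem_insert_iff, Set.mem_diff, Set.mem_singleton_iff, Set.mem_setOf_eq]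
    omega

end Aux
section Aux2

lemma chainU (e : ℕ) (he : 0 < e) (k b0 : ℕ) :
    ∀ c : ℕ, Relation.ReflTransGen (RemoveHook e) (threeTwoOne 0 (b0 + e * k) c)
      (threeTwoOne 0 b0 (c + e * k)) := by
  induction k with
  | zero => intro c; simp only [Nat.mul_zero, Nat.add_zero]; exact Relation.ReflTransGen.refl
  | succ k ih =>
    intro c
    have h1 : RemoveHook e (threeTwoOne 0 (b0 + e * (k+1)) c)
        (threeTwoOne 0 (b0 + e * k) (c + e)) := by
      have h := move_upper e (b0 + e * (k+1)) c he (by rw [Nat.mul_succ]; omega)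
      have h2 : b0 + e * (k+1) - e = b0 + e * k := by rw [Nat.mul_succ]; omega
      rwa [h2] at h
    have h3 : c + e + e * k = c + e * (k+1) := by rw [Nat.mul_succ]; omega
    exact Relation.ReflTransGen.head h1 (h3 ▸ ih (c + e))

lemma chainL (e : ℕ) (he : 0 < e) (k b c0 : ℕ) :
    Relation.ReflTransGen (RemoveHook e) (threeTwoOne 0 b (c0 + e * k))
      (threeTwoOne 0 b c0) := by
  induction k with
  | zero => simp only [Nat.mul_zero, Nat.add_zero]; exact Relation.ReflTransGen.refl
  | succ k ih =>
    have h1 : RemoveHook e (threeTwoOne 0 b (c0 + e * (k+1)))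
        (threeTwoOne 0 b (c0 + e * k)) := by
      have h := move_lower e b (c0 + e * (k+1)) he (by rw [Nat.mul_succ]; omega)
      have h2 : c0 + e * (k+1) - e = c0 + e * k := by rw [Nat.mul_succ]; omega
      rwa [h2] at h
    exact Relation.ReflTransGen.head h1 ih

lemma T000_eq : threeTwoOne 0 0 0 = emptyPartition := by
  apply partition_eq_of_part_eq
  funext k
  simp [threeTwoOne, emptyPartition]

def chi (e : ℕ) (z : ℤ) : ℤ := if ((z : ZMod e) = 1) then 1 else 0

def phiAux (e : ℕ) (p : Partition) (N : ℕ) : ℤ :=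
  ∑ k ∈ Finset.range N, (chi e ((p.part k : ℤ) - k) - chi e (-(k : ℤ)))

lemma phiAux_empty (e N : ℕ) : phiAux e emptyPartition N = 0 :=
  Finset.sum_eq_zero fun k _ => by simp [emptyPartition, chi]

end Aux2
section Aux3

lemma beta_strictAnti (p : Partition) : StrictAnti (fun k : ℕ => (p.part k : ℤ) - k) := by
  intro a b hab
  have := p.antitone a b hab.le
  simp only
  omega

lemma finite_aux (p : Partition) (C : ℤ) (Q : ℤ → Prop) :
    (p.betaSet ∩ {z | C ≤ z ∧ Q z}).Finite := by
  apply (Set.finite_Icc C ((p.part 0 : ℤ))).subset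
  rintro z ⟨⟨k, rfl⟩, hz, -⟩
  have := p.antitone 0 k (Nat.zero_le k)
  simp only [Set.mem_Icc]
  omega

lemma finite_aux2 (C : ℤ) (Q : ℤ → Prop) :
    ({z : ℤ | z ≤ 0} ∩ {z | C ≤ z ∧ Q z}).Finite := by
  apply (Set.finite_Icc C (0:ℤ)).subset
  rintro z ⟨h0, hz, -⟩
  simp only [Set.mem_Icc]
  exact ⟨hz, h0⟩

lemma phiAux_eq (e : ℕ) (p : Partition) (N : ℕ) (hN : ∀ n, N ≤ n → p.part n = 0) :
    phiAux e p N =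
      ((p.betaSet ∩ {z : ℤ | 1 - (N:ℤ) ≤ z ∧ (z : ZMod e) = 1}).ncard : ℤ) -
      (({z : ℤ | z ≤ 0} ∩ {z : ℤ | 1 - (N:ℤ) ≤ z ∧ (z : ZMod e) = 1}).ncard : ℤ) := by
  unfold phiAux chi
  rw [Finset.sum_sub_distrib]
  have hA : (∑ k ∈ Finset.range N, if ((((p.part k : ℤ) - k : ℤ) : ZMod e) = 1) then (1:ℤ) else 0)
      = ((p.betaSet ∩ {z : ℤ | 1 - (N:ℤ) ≤ z ∧ (z : ZMod e) = 1}).ncard : ℤ) := by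
    rw [Finset.sum_boole]
    congr 1
    have himg : (((Finset.range N).filter
        (fun k => ((((p.part k : ℤ) - k : ℤ) : ZMod e) = 1))).image
          (fun k : ℕ => (p.part k : ℤ) - k) : Set ℤ)
        = p.betaSet ∩ {z : ℤ | 1 - (N:ℤ) ≤ z ∧ (z : ZMod e) = 1} := by
      ext z
      simp only [Finset.coe_image, Finset.coe_filter, Finset.mem_range, Set.mem_image,
        Set.mem_setOf_eq, Set.mem_inter_iff, Partition.betaSet]
      constructor
      · rintro ⟨k, ⟨hk, hres⟩, rfl⟩
        refine ⟨⟨k, rfl⟩, ?_, hres⟩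
        have : (0:ℤ) ≤ (p.part k : ℤ) := Int.natCast_nonneg _
        omega
      · rintro ⟨⟨k, rfl⟩, hz, hres⟩
        refine ⟨k, ⟨?_, hres⟩, rfl⟩
        by_contra hk
        push_neg at hk
        rw [hN k hk] at hz
        simp only [Nat.cast_zero] at hz
        omega
    rw [← himg, Set.ncard_coe_finset,
      Finset.card_image_of_injective _ (beta_strictAnti p).injective]
  have hB : (∑ k ∈ Finset.range N, if (((-(k:ℤ) : ℤ) : ZMod e) = 1) then (1:ℤ) else 0)
      = (({z : ℤ | z ≤ 0} ∩ {z : ℤ | 1 - (N:ℤ) ≤ z ∧ (z : ZMod e) = 1}).ncard : ℤ) := by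
    rw [Finset.sum_boole]
    congr 1
    have himg : (((Finset.range N).filter
        (fun k : ℕ => (((-(k:ℤ) : ℤ) : ZMod e) = 1))).image (fun k : ℕ => -(k:ℤ)) : Set ℤ)
        = {z : ℤ | z ≤ 0} ∩ {z : ℤ | 1 - (N:ℤ) ≤ z ∧ (z : ZMod e) = 1} := by
      ext z
      simp only [Finset.coe_image, Finset.coe_filter, Finset.mem_range, Set.mem_image,
        Set.mem_setOf_eq, Set.mem_inter_iff]
      constructor
      · rintro ⟨k, ⟨hk, hres⟩, rfl⟩
        refine ⟨by omega, by omega, hres⟩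
      · rintro ⟨h0, hz, hres⟩
        refine ⟨(-z).toNat, ⟨by omega, ?_⟩, by omega⟩
        have hzz : -((-z).toNat : ℤ) = z := by omega
        rw [hzz]; exact hres
    have hinj : Function.Injective (fun k : ℕ => -(k:ℤ)) := by
      intro a b hab; simp only [neg_inj, Nat.cast_inj] at hab; exact hab
    rw [← himg, Set.ncard_coe_finset, Finset.card_image_of_injective _ hinj]
  rw [hA, hB]

end Aux3
section Aux4

lemma int_no_dvd {e : ℕ} {a : ℤ} (h1 : -(e:ℤ) < a) (h2 : a < 0) : ¬ (e:ℤ) ∣ a := by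
  rintro ⟨t, rfl⟩
  rcases lt_trichotomy t 0 with h | rfl | h
  · nlinarith [mul_nonneg (Int.natCast_nonneg e) (by omega : (0:ℤ) ≤ -1 - t)]
  · omega
  · nlinarith [mul_nonneg (Int.natCast_nonneg e) (by omega : (0:ℤ) ≤ t - 1)]

lemma phi_step (e : ℕ) {lam mu : Partition} (h : RemoveHook e lam mu) :
    ∃ N₀ : ℕ, ∀ N, N₀ ≤ N → phiAux e lam N = phiAux e mu N := by
  obtain ⟨x, hx, hxe, hset⟩ := h
  obtain ⟨N₁, hN₁⟩ := lam.eventually_zero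
  obtain ⟨N₂, hN₂⟩ := mu.eventually_zero
  refine ⟨N₁ + N₂ + (x - e).natAbs + e + 2, fun N hN => ?_⟩
  rw [phiAux_eq e lam N (fun n hn => hN₁ n (by omega)),
    phiAux_eq e mu N (fun n hn => hN₂ n (by omega))]
  have hxN : 1 - (N:ℤ) ≤ x - e := by omega
  have hfin : (lam.betaSet ∩ {z : ℤ | 1 - (N:ℤ) ≤ z ∧ (z : ZMod e) = 1}).Finite :=
    finite_aux lam _ _
  have hcastxe : (((x - (e:ℤ)) : ℤ) : ZMod e) = ((x : ℤ) : ZMod e) := by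
    have h0 : (((e:ℤ)) : ZMod e) = 0 := by simp
    rw [Int.cast_sub, h0, sub_zero]
  by_cases hres : ((x : ℤ) : ZMod e) = 1
  · have hμT : mu.betaSet ∩ {z : ℤ | 1 - (N:ℤ) ≤ z ∧ (z : ZMod e) = 1}
        = insert (x - e) ((lam.betaSet ∩ {z : ℤ | 1 - (N:ℤ) ≤ z ∧ (z : ZMod e) = 1}) \ {x}) := by
      rw [hset]
      ext z
      simp only [Set.mem_inter_iff, Set.mem_insert_iff, Set.mem_diff, Set.mem_singleton_iff,
        Set.mem_setOf_eq]
      constructor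
      · rintro ⟨hz1 | ⟨hzB, hzx⟩, hzT⟩
        · exact Or.inl hz1
        · exact Or.inr ⟨⟨hzB, hzT⟩, hzx⟩
      · rintro (rfl | ⟨⟨hzB, hzT⟩, hzx⟩)
        · exact ⟨Or.inl rfl, hxN, hcastxe.trans hres⟩
        · exact ⟨Or.inr ⟨hzB, hzx⟩, hzT⟩
    have hxmem : x ∈ lam.betaSet ∩ {z : ℤ | 1 - (N:ℤ) ≤ z ∧ (z : ZMod e) = 1} :=
      ⟨hx, by omega, hres⟩
    have hxenot : (x - e) ∉
        (lam.betaSet ∩ {z : ℤ | 1 - (N:ℤ) ≤ z ∧ (z : ZMod e) = 1}) \ {x} := by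
      rintro ⟨⟨hmem, -⟩, -⟩; exact hxe hmem
    have hcards : (mu.betaSet ∩ {z : ℤ | 1 - (N:ℤ) ≤ z ∧ (z : ZMod e) = 1}).ncard
        = (lam.betaSet ∩ {z : ℤ | 1 - (N:ℤ) ≤ z ∧ (z : ZMod e) = 1}).ncard := by
      rw [hμT, Set.ncard_insert_of_notMem hxenot hfin.diff]
      exact Set.ncard_diff_singleton_add_one hxmem hfin
    rw [hcards]
  · have hμT : mu.betaSet ∩ {z : ℤ | 1 - (N:ℤ) ≤ z ∧ (z : ZMod e) = 1}
        = lam.betaSet ∩ {z : ℤ | 1 - (N:ℤ) ≤ z ∧ (z : ZMod e) = 1} := by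
      rw [hset]
      ext z
      simp only [Set.mem_inter_iff, Set.mem_insert_iff, Set.mem_diff, Set.mem_singleton_iff,
        Set.mem_setOf_eq]
      constructor
      · rintro ⟨rfl | ⟨hzB, -⟩, hzT⟩
        · exact absurd (hcastxe.symm.trans hzT.2) hres
        · exact ⟨hzB, hzT.1, hzT.2⟩
      · rintro ⟨hzB, hzT⟩
        refine ⟨Or.inr ⟨hzB, ?_⟩, hzT⟩
        rintro rfl
        exact hres hzT.2
    rw [hμT]

lemma phi_chain (e : ℕ) {p q : Partition} (h : Relation.ReflTransGen (RemoveHook e) p q) :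
    ∃ N₀ : ℕ, ∀ N, N₀ ≤ N → phiAux e p N = phiAux e q N := by
  induction h with
  | refl => exact ⟨0, fun _ _ => rfl⟩
  | tail hab hbc ih =>
    obtain ⟨N₁, h1⟩ := ih
    obtain ⟨N₂, h2⟩ := phi_step e hbc
    exact ⟨max N₁ N₂, fun N hN =>
      (h1 N (le_of_max_le_left hN)).trans (h2 N (le_of_max_le_right hN))⟩

end Aux4
/-- For `e ≥ 3` odd and `m` a positive multiple of `e`, and `0 ≤ j ≤ m`,
the `e`-core of `2^j 1^{2m-2j}` is the empty partition iff `j ≡ 0` or `1 (mod e)`. -/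
theorem ecore_two_column_empty_iff
    (e m : ℕ) (he : Odd e) (he3 : 3 ≤ e) (hm : 0 < m) (hem : e ∣ m)
    (j : ℕ) (hj : j ≤ m) :
    HasECore e (threeTwoOne 0 j (2 * m - 2 * j)) emptyPartition ↔
      (j % e = 0 ∨ j % e = 1) := by
  have he0 : 0 < e := by omega
  constructor
  · intro hcore
    by_contra hne
    push_neg at hne
    obtain ⟨hne0, hne1⟩ := hne
    have hr2 : 2 ≤ j % e := by omega
    have hre : j % e < e := Nat.mod_lt _ he0
    have hj2 : 2 ≤ j := by have := Nat.mod_le j e; omega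
    obtain ⟨s, hs⟩ := hem
    obtain ⟨N₀, hchain⟩ := phi_chain e hcore.1
    set N := max N₀ (2*m + 2) with hNdef
    have hNb : 2*m + 2 ≤ N := le_max_right _ _
    have hpz : ∀ n, N ≤ n → (threeTwoOne 0 j (2*m - 2*j)).part n = 0 := by
      intro n hn
      simp only [threeTwoOne]
      split_ifs <;> omega
    have h1' := hchain N (le_max_left _ _)
    rw [phiAux_empty, phiAux_eq e _ N hpz, betaSet_T] at h1'
    haveI : NeZero e := ⟨by omega⟩
    have hq := Nat.div_add_mod j e
    have hqz : (e:ℤ) * ((j / e : ℕ):ℤ) + ((j % e : ℕ):ℤ) = (j:ℤ) := by exact_mod_cast hq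
    have hmz : (m:ℤ) = (e:ℤ) * ((s:ℕ):ℤ) := by exact_mod_cast hs
    have hdvd_of : ∀ a : ℤ, ((a : ℤ) : ZMod e) = 1 → (e:ℤ) ∣ (a - 1) := by
      intro a ha
      have h2 : (((a - 1 : ℤ)) : ZMod e) = 0 := by push_cast [ha]; ring
      exact (ZMod.intCast_zmod_eq_zero_iff_dvd _ e).mp h2
    have hres2 : ((2 : ℤ) : ZMod e) ≠ 1 := by
      intro h
      have h2 := Int.le_of_dvd (by norm_num) (hdvd_of 2 h)
      omega
    have hresa : (((2 - (j:ℤ) : ℤ)) : ZMod e) ≠ 1 := by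
      intro h
      obtain ⟨t, ht⟩ := hdvd_of _ h
      have hd2 : (e:ℤ) ∣ (1 - ((j % e : ℕ):ℤ)) := by
        refine ⟨t + ((j / e : ℕ):ℤ), ?_⟩
        have hexp : (e:ℤ) * (t + ((j / e : ℕ):ℤ)) = e*t + e*((j / e : ℕ):ℤ) := by ring
        rw [hexp]
        omega
      exact int_no_dvd (by omega) (by omega) hd2
    have hresb : (((1 - (j:ℤ) - ((2*m - 2*j : ℕ):ℤ) : ℤ)) : ZMod e) ≠ 1 := by
      intro h
      obtain ⟨t, ht⟩ := hdvd_of _ h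
      have hd2 : (e:ℤ) ∣ (((j % e : ℕ):ℤ) - e) := by
        refine ⟨t - ((j / e : ℕ):ℤ) + 2*(s:ℤ) - 1, ?_⟩
        have hexp : (e:ℤ) * (t - ((j / e : ℕ):ℤ) + 2*(s:ℤ) - 1)
            = e*t - e*((j / e : ℕ):ℤ) + 2*((e:ℤ)*(s:ℤ)) - e := by ring
        rw [hexp]
        omega
      exact int_no_dvd (by omega) (by omega) hd2
    have hsetA : {z : ℤ | z ≤ 2 ∧ z ≠ 2 - (j:ℤ) ∧ z ≠ 1 - (j:ℤ) - ((2*m - 2*j : ℕ):ℤ)} ∩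
        {z : ℤ | 1 - (N:ℤ) ≤ z ∧ (z : ZMod e) = 1}
        = insert 1 ({z : ℤ | z ≤ 0} ∩ {z : ℤ | 1 - (N:ℤ) ≤ z ∧ (z : ZMod e) = 1}) := by
      ext z
      simp only [Set.mem_inter_iff, Set.mem_insert_iff, Set.mem_setOf_eq]
      constructor
      · rintro ⟨⟨hz2, hza, hzb⟩, hzN, hzres⟩
        rcases eq_or_ne z 1 with rfl | hz1
        · exact Or.inl rfl
        · refine Or.inr ⟨?_, hzN, hzres⟩
          rcases eq_or_ne z 2 with rfl | hz22
          · exact absurd hzres hres2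
          · omega
      · rintro (rfl | ⟨hz0, hzN, hzres⟩)
        · exact ⟨⟨by omega, by omega, by omega⟩, by omega, Int.cast_one⟩
        · refine ⟨⟨by omega, ?_, ?_⟩, hzN, hzres⟩
          · rintro rfl; exact hresa hzres
          · rintro rfl; exact hresb hzres
    have hnm : (1:ℤ) ∉ ({z : ℤ | z ≤ 0} ∩ {z : ℤ | 1 - (N:ℤ) ≤ z ∧ (z : ZMod e) = 1}) := by
      rintro ⟨h1le, -⟩
      norm_num at h1le
    rw [hsetA, Set.ncard_insert_of_notMem hnm (finite_aux2 _ _)] at h1'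
    push_cast at h1'
    omega
  · intro hj01
    refine ⟨?_, isECore_empty e⟩
    obtain ⟨s, hs⟩ := hem
    rcases hj01 with h0 | h1
    · obtain ⟨k, rfl⟩ := Nat.dvd_of_mod_eq_zero h0
      have c1 := chainU e he0 k 0 (2*m - 2*(e*k))
      rw [Nat.zero_add] at c1
      have hks : k ≤ s := Nat.le_of_mul_le_mul_left (by omega) he0
      obtain ⟨d, rfl⟩ := Nat.exists_eq_add_of_le hks
      have hm2 : m = e*k + e*d := by rw [hs, Nat.mul_add]
      have harith : 2*m - 2*(e*k) + e*k = 0 + e*(k + 2*d) := by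
        have hr : e * (k + 2*d) = e*k + 2*(e*d) := by ring
        omega
      rw [harith] at c1
      have c2 := chainL e he0 (k + 2*d) 0 0
      have := c1.trans c2
      rwa [T000_eq] at this
    · obtain ⟨k, hjk⟩ : ∃ k, j = 1 + e * k :=
        ⟨j / e, by have := Nat.div_add_mod j e; omega⟩
      rw [hjk]
      have c1 := chainU e he0 k 1 (2*m - 2*(1 + e*k))
      have hks : k + 1 ≤ s := by
        have hlt : e * k < e * s := by omega
        exact Nat.lt_of_mul_lt_mul_left hlt
      obtain ⟨d, hsd⟩ := Nat.exists_eq_add_of_le hks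
      have hm2 : m = e*k + e + e*d := by rw [hs, hsd]; ring
      have harith : 2*m - 2*(1 + e*k) + e*k = (e - 2) + e*(2*d + k + 1) := by
        have hr : e*(2*d + k + 1) = 2*(e*d) + e*k + e := by ring
        omega
      rw [harith] at c1
      have c2 := chainL e he0 (2*d + k + 1) 1 (e - 2)
      have c3 := Relation.ReflTransGen.single (move_final e he3)
      have := (c1.trans c2).trans c3
      rwa [T000_eq] at this
end GUnBranching
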